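/- Let π : E → B be a continuous open surjection between topological spaces, with E locally compact Hausdorff, such that the fibers of π are exactly the orbits of a continuous action of the circle group 𝕋 on E. Then for every compact set K ⊆ B, the set π⁻¹(K) is compact. -/

import Mathlib

/-- Let `π : E → B` be a continuous open surjection, `E` locally compact
Hausdorff, whose fibers are exactly the orbits of a continuous action of the circle
group `𝕋` on `E`.  Then the preimage of every compact subset of `B` is compact. -/
theorem stmt_6 {E B : Type*} [TopologicalSpace E] [LocallyCompactSpace E] [T2Space E]
    [TopologicalSpace B] [T2Space B]
    [MulAction Circle E] [ContinuousSMul Circle E]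
    (π : E → B) (hcont : Continuous π) (hopen : IsOpenMap π)
    (hsurj : Function.Surjective π)
    (hfib : ∀ e e' : E, π e = π e' ↔ ∃ z : Circle, e' = z • e)
    (K : Set B) (hK : IsCompact K) :
    IsCompact (π ⁻¹' K) := by
  have hKcl : IsClosed (π ⁻¹' K) := hK.isClosed.preimage hcont
  choose e he using hsurj
  choose N hNcomp hNmem using fun b : B => exists_compact_mem_nhds (e b)
  -- open cover of K
  have hcover : K ⊆ ⋃ b : K, π '' interior (N b) := by
    intro b hb
    exact Set.mem_iUnion.mpr ⟨⟨b, hb⟩, e b, mem_interior_iff_mem_nhds.mpr (hNmem b), he b⟩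
  obtain ⟨t, ht⟩ := hK.elim_finite_subcover (fun b : K => π '' interior (N b))
    (fun b => hopen _ isOpen_interior) hcover
  -- each preimage of π '' (N b) is contained in the compact set Circle • (N b)
  have key : ∀ b : B, π ⁻¹' (π '' N b) ⊆ (fun p : Circle × E => p.1 • p.2) '' (Set.univ ×ˢ N b) := by
    rintro b y ⟨x, hx, hxy⟩
    obtain ⟨z, hz⟩ := (hfib x y).mp hxy
    exact ⟨(z, x), ⟨trivial, hx⟩, hz.symm⟩
  have hC : ∀ b : B, IsCompact ((fun p : Circle × E => p.1 • p.2) '' (Set.univ ×ˢ N b)) :=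
    fun b => ((isCompact_univ.prod (hNcomp b)).image continuous_smul)
  refine IsCompact.of_isClosed_subset (t.isCompact_biUnion fun i _ => hC (i : K)) hKcl ?_
  intro y hy
  obtain ⟨i, hit, hi⟩ := Set.mem_iUnion₂.mp (ht hy)
  exact Set.mem_biUnion hit (key i (Set.image_mono (f := π) interior_subset hi))
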